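/- Let M be a definably complete locally o-minimal structure. The discrete closure operator discl, where discl(A) is the set of x ∈ M belonging to some A-definable discrete closed subset of M, is idempotent: discl(discl(A)) = discl(A) for every A ⊆ M. -/

import Mathlib

open FirstOrder Set

namespace Paper

variable (L : FirstOrder.Language)

/-- A subset of `Mⁿ` definable with arbitrary parameters from `M`. -/
def Def (M : Type*) [L.Structure M] {n : ℕ} (s : Set (Fin n → M)) : Prop :=
  Set.Definable (Set.univ : Set M) L s

/-- A subset of `M` definable with arbitrary parameters from `M`. -/
def Def1 (M : Type*) [L.Structure M] (s : Set M) : Prop :=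
  Def L M {f : Fin 1 → M | f 0 ∈ s}

/-- A subset of `M × M` definable with arbitrary parameters from `M`. -/
def Def2 (M : Type*) [L.Structure M] (s : Set (M × M)) : Prop :=
  Def L M {f : Fin 2 → M | (f 0, f 1) ∈ s}

/-- A discrete subset of a topological space. -/
def IsDiscrete {X : Type*} [TopologicalSpace X] (s : Set X) : Prop :=
  ∀ x ∈ s, ∃ U : Set X, IsOpen U ∧ x ∈ U ∧ U ∩ s = {x}

/-- An open interval (with possibly infinite endpoints). -/
def IsOInterval {M : Type*} [Preorder M] (s : Set M) : Prop :=
  (∃ a b : M, s = Set.Ioo a b) ∨ (∃ a, s = Set.Ioi a) ∨ (∃ b, s = Set.Iio b) ∨ s = Set.univ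

/-- A finite union of points and open intervals. -/
def FinUnionPtsIntervals {M : Type*} [Preorder M] (s : Set M) : Prop :=
  ∃ (F : Finset M) (n : ℕ) (J : Fin n → Set M),
    (∀ i, IsOInterval (J i)) ∧ s = ↑F ∪ ⋃ i, J i

/-- Local o-minimality. -/
def LocallyOMinimal (M : Type*) [L.Structure M] [LinearOrder M] : Prop :=
  ∀ s : Set M, Def1 L M s → ∀ a : M,
    ∃ I : Set M, IsOInterval I ∧ a ∈ I ∧ FinUnionPtsIntervals (s ∩ I)

/-- Definable completeness. -/
def DefinablyComplete (M : Type*) [L.Structure M] [LinearOrder M] : Prop :=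
  ∀ s : Set M, Def1 L M s → s.Nonempty →
    (BddAbove s → ∃ a, IsLUB s a) ∧ (BddBelow s → ∃ a, IsGLB s a)

/-- A coordinate projection of `X ⊆ Mⁿ` to `M^d` has image with nonempty interior. -/
def HasDimWit {M : Type*} [TopologicalSpace M] {n : ℕ} (X : Set (Fin n → M)) (d : ℕ) : Prop :=
  ∃ σ : Fin d ↪ Fin n, (interior ((fun x => x ∘ σ) '' X)).Nonempty

/-- The projection dimension of a subset of `Mⁿ`, with `projDim ∅ = ⊥ = -∞`. -/
noncomputable def projDim {M : Type*} [TopologicalSpace M] {n : ℕ}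
    (X : Set (Fin n → M)) : WithBot ℕ∞ :=
  ⨆ d ∈ {d : ℕ | HasDimWit X d}, ((d : ℕ∞) : WithBot ℕ∞)

/-- The discrete closure of `A ⊆ M`. -/
def discl (M : Type*) [L.Structure M] [TopologicalSpace M] (A : Set M) : Set M :=
  {x | ∃ s : Set M, Set.Definable A L {f : Fin 1 → M | f 0 ∈ s} ∧
    IsDiscrete s ∧ IsClosed s ∧ x ∈ s}


end Paper

open Paper

section Toolkit
set_option linter.unusedSectionVars false
open FirstOrder.Language

variable {L : FirstOrder.Language} {M : Type*} [L.IsOrdered] [LinearOrder M] [L.Structure M]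
  [L.OrderedStructure M] {A : Set M}

lemma def_le {n : ℕ} (i j : Fin n) :
    A.Definable L {f : Fin n → M | f i ≤ f j} := by
  apply Definable.mono (A := (∅ : Set M)) _ (empty_subset A)
  rw [Set.empty_definable_iff]
  refine ⟨Term.le (Term.var (Sum.inl i)) (Term.var (Sum.inl j)), ?_⟩
  ext f
  simp [Formula.Realize, Term.realize_le]

lemma def_eq {n : ℕ} (i j : Fin n) :
    A.Definable L {f : Fin n → M | f i = f j} := by
  apply Definable.mono (A := (∅ : Set M)) _ (empty_subset A)
  rw [Set.empty_definable_iff]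
  refine ⟨Term.equal (Term.var i) (Term.var j), ?_⟩
  ext f
  simp [Formula.realize_equal]

lemma def_lt {n : ℕ} (i j : Fin n) :
    A.Definable L {f : Fin n → M | f i < f j} := by
  have h : {f : Fin n → M | f i < f j}
      = {f : Fin n → M | f i ≤ f j} ∩ {f : Fin n → M | f i = f j}ᶜ := by
    ext f; simp [lt_iff_le_and_ne]
  rw [h]
  exact (def_le i j).inter (def_eq i j).compl

lemma def_const {n : ℕ} (i : Fin n) {a : M} (ha : a ∈ A) :
    A.Definable L {f : Fin n → M | f i = a} := by
  refine ⟨Term.equal (Term.var i) (Constants.term (L.con (⟨a, ha⟩ : A))), ?_⟩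
  ext f
  simp [Formula.realize_equal]

lemma def_rel2 {E : Set (M × M)} (hE : A.Definable L {w : Fin 2 → M | (w 0, w 1) ∈ E})
    {n : ℕ} (i j : Fin n) :
    A.Definable L {f : Fin n → M | (f i, f j) ∈ E} :=
  hE.preimage_comp (![i, j])

lemma def_rel1 {S : Set M} (hS : A.Definable L {w : Fin 1 → M | w 0 ∈ S})
    {n : ℕ} (i : Fin n) :
    A.Definable L {f : Fin n → M | f i ∈ S} :=
  hS.preimage_comp (![i])

lemma def_ex {n : ℕ} {P : (Fin (n+1) → M) → Prop}
    (h : A.Definable L {f : Fin (n+1) → M | P f}) :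
    A.Definable L {g : Fin n → M | ∃ a : M, P (Fin.cons a g)} := by
  have him := h.image_comp (Fin.succ : Fin n → Fin (n+1))
  convert him using 1
  ext g
  constructor
  · rintro ⟨a, ha⟩
    exact ⟨Fin.cons a g, ha, by ext i; simp⟩
  · rintro ⟨f, hf, rfl⟩
    exact ⟨f 0, by
      have key : ∀ g : Fin (n+1) → M, g = f → P g := fun g hg => hg ▸ hf
      exact key _ (Fin.cons_self_tail f)⟩

lemma def_all {n : ℕ} {P : (Fin (n+1) → M) → Prop}
    (h : A.Definable L {f : Fin (n+1) → M | P f}) :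
    A.Definable L {g : Fin n → M | ∀ a : M, P (Fin.cons a g)} := by
  have h1 : A.Definable L {f : Fin (n+1) → M | ¬ P f} := h.compl
  have h3 := (def_ex h1).compl
  convert h3 using 1
  ext g
  simp

lemma def_congr {n : ℕ} {s t : Set (Fin n → M)} (h : A.Definable L s) (e : t = s) :
    A.Definable L t := e ▸ h

lemma def_imp {n : ℕ} {P Q : (Fin n → M) → Prop}
    (hP : A.Definable L {f : Fin n → M | P f}) (hQ : A.Definable L {f : Fin n → M | Q f}) :
    A.Definable L {f : Fin n → M | P f → Q f} := by
  have h := hP.compl.union hQ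
  refine def_congr h ?_
  ext f
  simp [imp_iff_not_or]

lemma def_and {n : ℕ} {P Q : (Fin n → M) → Prop}
    (hP : A.Definable L {f : Fin n → M | P f}) (hQ : A.Definable L {f : Fin n → M | Q f}) :
    A.Definable L {f : Fin n → M | P f ∧ Q f} :=
  hP.inter hQ

lemma def_not {n : ℕ} {P : (Fin n → M) → Prop}
    (hP : A.Definable L {f : Fin n → M | P f}) :
    A.Definable L {f : Fin n → M | ¬ P f} :=
  hP.compl

lemma def_ne {n : ℕ} (i j : Fin n) :
    A.Definable L {f : Fin n → M | f i ≠ f j} :=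
  (def_eq i j).compl

lemma def_le_const {n : ℕ} (i : Fin n) {a : M} (ha : a ∈ A) :
    A.Definable L {f : Fin n → M | f i ≤ a} := by
  refine def_congr (def_ex (def_and (def_const (0 : Fin (n+1)) ha) (def_le i.succ 0))) ?_
  ext g
  exact ⟨fun h => ⟨a, rfl, h⟩, fun ⟨c, h1, h2⟩ => le_of_le_of_eq h2 h1⟩

lemma def_const_le {n : ℕ} (i : Fin n) {a : M} (ha : a ∈ A) :
    A.Definable L {f : Fin n → M | a ≤ f i} := by
  refine def_congr (def_ex (def_and (def_const (0 : Fin (n+1)) ha) (def_le 0 i.succ))) ?_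
  ext g
  exact ⟨fun h => ⟨a, rfl, h⟩, fun ⟨c, h1, h2⟩ => le_of_eq_of_le h1.symm h2⟩

lemma def_lt_const {n : ℕ} (i : Fin n) {a : M} (ha : a ∈ A) :
    A.Definable L {f : Fin n → M | f i < a} := by
  refine def_congr (def_ex (def_and (def_const (0 : Fin (n+1)) ha) (def_lt i.succ 0))) ?_
  ext g
  exact ⟨fun h => ⟨a, rfl, h⟩, fun ⟨c, h1, h2⟩ => lt_of_lt_of_eq h2 h1⟩

lemma def_const_lt {n : ℕ} (i : Fin n) {a : M} (ha : a ∈ A) :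
    A.Definable L {f : Fin n → M | a < f i} := by
  refine def_congr (def_ex (def_and (def_const (0 : Fin (n+1)) ha) (def_lt 0 i.succ))) ?_
  ext g
  exact ⟨fun h => ⟨a, rfl, h⟩, fun ⟨c, h1, h2⟩ => lt_of_eq_of_lt h1.symm h2⟩

end Toolkit

section Toolkit2
set_option linter.unusedSectionVars false
open FirstOrder.Language
variable {L : FirstOrder.Language} {M : Type*} [L.IsOrdered] [LinearOrder M] [L.Structure M]
  [L.OrderedStructure M] {A : Set M}

lemma def_rel2_constL {E : Set (M × M)} (hE : A.Definable L {w : Fin 2 → M | (w 0, w 1) ∈ E})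
    {a : M} (ha : a ∈ A) {n : ℕ} (i : Fin n) :
    A.Definable L {f : Fin n → M | (a, f i) ∈ E} := by
  refine def_congr (def_ex (def_and (def_const (0 : Fin (n+1)) ha) (def_rel2 hE 0 i.succ))) ?_
  ext g
  exact ⟨fun h => ⟨a, rfl, h⟩, fun ⟨c, h1, h2⟩ => h1 ▸ h2⟩

lemma def_rel2_constR {E : Set (M × M)} (hE : A.Definable L {w : Fin 2 → M | (w 0, w 1) ∈ E})
    {a : M} (ha : a ∈ A) {n : ℕ} (i : Fin n) :
    A.Definable L {f : Fin n → M | (f i, a) ∈ E} := by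
  refine def_congr (def_ex (def_and (def_const (0 : Fin (n+1)) ha) (def_rel2 hE i.succ 0))) ?_
  ext g
  exact ⟨fun h => ⟨a, rfl, h⟩, fun ⟨c, h1, h2⟩ => h1 ▸ h2⟩

end Toolkit2
set_option linter.unusedSectionVars false
set_option maxHeartbeats 1000000

section Analytic

variable {L : FirstOrder.Language} {M : Type*} [L.IsOrdered] [LinearOrder M] [L.Structure M]
  [L.OrderedStructure M] [DenselyOrdered M] [NoMaxOrder M] [NoMinOrder M]
  [TopologicalSpace M] [OrderTopology M]

/-- The first-order criterion for being discrete and closed. -/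
def DCrit (s : Set M) (x : M) : Prop :=
  ∃ u v : M, u < x ∧ x < v ∧ ∀ z, u < z → z < v → z ∈ s → z = x

lemma dc_iff_crit {s : Set M} : (Paper.IsDiscrete s ∧ IsClosed s) ↔ ∀ x : M, DCrit s x := by
  constructor
  · rintro ⟨hd, hc⟩ x
    by_cases hx : x ∈ s
    · obtain ⟨U, hUo, hxU, hUs⟩ := hd x hx
      obtain ⟨u, v, hmem, hsub⟩ := mem_nhds_iff_exists_Ioo_subset.1 (hUo.mem_nhds hxU)
      exact ⟨u, v, hmem.1, hmem.2, fun z hu hv hz => by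
        have : z ∈ U ∩ s := ⟨hsub ⟨hu, hv⟩, hz⟩
        rwa [hUs] at this⟩
    · have : sᶜ ∈ nhds x := hc.isOpen_compl.mem_nhds hx
      obtain ⟨u, v, hmem, hsub⟩ := mem_nhds_iff_exists_Ioo_subset.1 this
      exact ⟨u, v, hmem.1, hmem.2, fun z hu hv hz => absurd hz (hsub ⟨hu, hv⟩)⟩
  · intro h
    constructor
    · intro x hx
      obtain ⟨u, v, hu, hv, hz⟩ := h x
      refine ⟨Ioo u v, isOpen_Ioo, ⟨hu, hv⟩, ?_⟩
      apply Subset.antisymm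
      · rintro z ⟨⟨h1, h2⟩, h3⟩
        exact hz z h1 h2 h3
      · rintro z rfl
        exact ⟨⟨hu, hv⟩, hx⟩
    · apply isClosed_of_closure_subset
      intro x hx
      obtain ⟨u, v, hu, hv, hz⟩ := h x
      obtain ⟨z, hzI, hzs⟩ := mem_closure_iff.1 hx (Ioo u v) isOpen_Ioo ⟨hu, hv⟩
      rwa [hz z hzI.1 hzI.2 hzs] at hzs

lemma subset_dc {s S : Set M} (hsub : s ⊆ S) (hd : Paper.IsDiscrete S) (hc : IsClosed S) :
    Paper.IsDiscrete s ∧ IsClosed s := by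
  constructor
  · intro x hx
    obtain ⟨U, hUo, hxU, hUs⟩ := hd x (hsub hx)
    refine ⟨U, hUo, hxU, Subset.antisymm ?_ ?_⟩
    · intro z hz
      have : z ∈ U ∩ S := ⟨hz.1, hsub hz.2⟩
      rwa [hUs] at this
    · rintro z rfl; exact ⟨hxU, hx⟩
  · apply isClosed_of_closure_subset
    intro x hx
    have hxS : x ∈ S := hc.closure_subset (closure_mono hsub hx)
    obtain ⟨U, hUo, hxU, hUs⟩ := hd x hxS
    obtain ⟨z, hzU, hzs⟩ := mem_closure_iff.1 hx U hUo hxU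
    have : z ∈ U ∩ S := ⟨hzU, hsub hzs⟩
    rw [hUs] at this
    rwa [← this]

/-- From local o-minimality structure of an interval at `p` from the right. -/
lemma ointerval_right {J : Set M} (hJ : IsOInterval J) (p : M) :
    (∃ r, p < r ∧ Ioo p r ⊆ J) ∨ (∃ r, p < r ∧ Ioo p r ∩ J = ∅) := by
  obtain ⟨r0, hr0⟩ := exists_gt p
  rcases hJ with ⟨a, b, rfl⟩ | ⟨a, rfl⟩ | ⟨b, rfl⟩ | rfl
  · rcases le_or_gt b p with hbp | hpb
    · exact Or.inr ⟨r0, hr0, by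
        ext z; simp only [mem_inter_iff, mem_Ioo, mem_empty_iff_false, iff_false]
        rintro ⟨⟨h1, _⟩, ⟨_, h4⟩⟩; exact absurd (h4.trans_le hbp) (lt_asymm h1)⟩
    · rcases lt_or_ge a p with hap | hpa
      · exact Or.inl ⟨b, hpb, fun z hz => ⟨hap.trans hz.1, hz.2⟩⟩
      · rcases eq_or_lt_of_le hpa with rfl | hpa'
        · exact Or.inl ⟨b, hpb, fun z hz => hz⟩
        · exact Or.inr ⟨a, hpa', by
            ext z; simp only [mem_inter_iff, mem_Ioo, mem_empty_iff_false, iff_false]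
            rintro ⟨⟨_, h2⟩, ⟨h3, _⟩⟩; exact absurd h2 (not_lt_of_gt h3)⟩
  · rcases lt_or_ge a p with hap | hpa
    · exact Or.inl ⟨r0, hr0, fun z hz => hap.trans hz.1⟩
    · rcases eq_or_lt_of_le hpa with rfl | hpa'
      · exact Or.inl ⟨r0, hr0, fun z hz => hz.1⟩
      · exact Or.inr ⟨a, hpa', by
          ext z; simp only [mem_inter_iff, mem_Ioo, mem_Ioi, mem_empty_iff_false, iff_false]
          rintro ⟨⟨_, h2⟩, h3⟩; exact absurd h2 (not_lt_of_gt h3)⟩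
  · rcases lt_or_ge p b with hpb | hbp
    · exact Or.inl ⟨b, hpb, fun z hz => hz.2⟩
    · exact Or.inr ⟨r0, hr0, by
        ext z; simp only [mem_inter_iff, mem_Ioo, mem_Iio, mem_empty_iff_false, iff_false]
        rintro ⟨⟨h1, _⟩, h3⟩; exact absurd (h3.trans_le hbp) (lt_asymm h1)⟩
  · exact Or.inl ⟨r0, hr0, fun z _ => mem_univ z⟩

lemma ointerval_left {J : Set M} (hJ : IsOInterval J) (p : M) :
    (∃ r, r < p ∧ Ioo r p ⊆ J) ∨ (∃ r, r < p ∧ Ioo r p ∩ J = ∅) := by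
  obtain ⟨r0, hr0⟩ := exists_lt p
  rcases hJ with ⟨a, b, rfl⟩ | ⟨a, rfl⟩ | ⟨b, rfl⟩ | rfl
  · rcases le_or_gt p a with hpa | hap
    · exact Or.inr ⟨r0, hr0, by
        ext z; simp only [mem_inter_iff, mem_Ioo, mem_empty_iff_false, iff_false]
        rintro ⟨⟨_, h2⟩, ⟨h3, _⟩⟩; exact absurd (hpa.trans_lt h3) (lt_asymm h2)⟩
    · rcases lt_or_ge p b with hpb | hbp
      · exact Or.inl ⟨a, hap, fun z hz => ⟨hz.1, hz.2.trans hpb⟩⟩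
      · rcases eq_or_lt_of_le hbp with rfl | hbp'
        · exact Or.inl ⟨a, hap, fun z hz => hz⟩
        · exact Or.inr ⟨b, hbp', by
            ext z; simp only [mem_inter_iff, mem_Ioo, mem_empty_iff_false, iff_false]
            rintro ⟨⟨h1, _⟩, ⟨_, h4⟩⟩; exact absurd h1 (not_lt_of_gt h4)⟩
  · rcases lt_or_ge p a with hpa | hap
    · exact Or.inr ⟨r0, hr0, by
        ext z; simp only [mem_inter_iff, mem_Ioo, mem_Ioi, mem_empty_iff_false, iff_false]
        rintro ⟨⟨_, h2⟩, h3⟩; exact absurd (h3.trans (h2.trans hpa)) (lt_irrefl a)⟩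
    · rcases eq_or_lt_of_le hap with rfl | hap'
      · exact Or.inr ⟨r0, hr0, by
          ext z; simp only [mem_inter_iff, mem_Ioo, mem_Ioi, mem_empty_iff_false, iff_false]
          rintro ⟨⟨_, h2⟩, h3⟩; exact absurd h2 (not_lt_of_gt h3)⟩
      · exact Or.inl ⟨a, hap', fun z hz => hz.1⟩
  · rcases le_or_gt p b with hpb | hbp
    · exact Or.inl ⟨r0, hr0, fun z hz => lt_of_lt_of_le hz.2 hpb⟩
    · exact Or.inr ⟨b, hbp, by
        ext z; simp only [mem_inter_iff, mem_Ioo, mem_Iio, mem_empty_iff_false, iff_false]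
        rintro ⟨⟨h1, _⟩, h3⟩; exact absurd h3 (not_lt_of_gt h1)⟩
  · exact Or.inl ⟨r0, hr0, fun z _ => mem_univ z⟩

end Analytic
section LOM

variable {L : FirstOrder.Language} {M : Type*} [L.IsOrdered] [LinearOrder M] [L.Structure M]
  [L.OrderedStructure M] [DenselyOrdered M] [NoMaxOrder M] [NoMinOrder M]
  [TopologicalSpace M] [OrderTopology M]

lemma ointerval_right_mem {I : Set M} (hI : IsOInterval I) {p : M} (hp : p ∈ I) :
    ∃ r, p < r ∧ Ioo p r ⊆ I := by
  obtain ⟨r0, hr0⟩ := exists_gt p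
  rcases hI with ⟨a, b, rfl⟩ | ⟨a, rfl⟩ | ⟨b, rfl⟩ | rfl
  · exact ⟨b, hp.2, fun z hz => ⟨hp.1.trans hz.1, hz.2⟩⟩
  · exact ⟨r0, hr0, fun z hz => hp.trans hz.1⟩
  · exact ⟨b, hp, fun z hz => hz.2⟩
  · exact ⟨r0, hr0, fun z _ => mem_univ z⟩

lemma ointerval_left_mem {I : Set M} (hI : IsOInterval I) {p : M} (hp : p ∈ I) :
    ∃ r, r < p ∧ Ioo r p ⊆ I := by
  obtain ⟨r0, hr0⟩ := exists_lt p
  rcases hI with ⟨a, b, rfl⟩ | ⟨a, rfl⟩ | ⟨b, rfl⟩ | rfl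
  · exact ⟨a, hp.1, fun z hz => ⟨hz.1, hz.2.trans hp.2⟩⟩
  · exact ⟨a, hp, fun z hz => hz.1⟩
  · exact ⟨r0, hr0, fun z hz => hz.2.trans hp⟩
  · exact ⟨r0, hr0, fun z _ => mem_univ z⟩

lemma lom_right (hlo : LocallyOMinimal L M) {X : Set M} (hX : Def1 L M X) (p : M) :
    ∃ r, p < r ∧ (Ioo p r ⊆ X ∨ Ioo p r ∩ X = ∅) := by
  classical
  obtain ⟨I, hI, hpI, F, n, J, hJ, hXI⟩ := hlo X hX p
  obtain ⟨q₁, hq₁, hq₁sub⟩ := ointerval_right_mem hI hpI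
  by_cases hcase : ∃ i : Fin n, ∃ r, p < r ∧ Ioo p r ⊆ J i
  · obtain ⟨i, r, hr, hsub⟩ := hcase
    refine ⟨r, hr, Or.inl fun z hz => ?_⟩
    have : z ∈ X ∩ I := by
      rw [hXI]; exact Or.inr (mem_iUnion.2 ⟨i, hsub hz⟩)
    exact this.1
  · push_neg at hcase
    have H : ∀ i : Fin n, ∃ r, p < r ∧ Ioo p r ∩ J i = ∅ := by
      intro i
      rcases ointerval_right (hJ i) p with ⟨r, hr, hsub⟩ | h
      · exact absurd hsub (hcase i r hr)
      · exact h
    choose rf hrf1 hrf2 using H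
    set Ff := F.filter (fun a => p < a) with hFf
    set rF : M := if h : Ff.Nonempty then min q₁ (Ff.min' h) else q₁ with hrF
    have hrFp : p < rF := by
      rw [hrF]
      split_ifs with h
      · have hm2 : Ff.min' h ∈ F ∧ p < Ff.min' h := Finset.mem_filter.1 (Ff.min'_mem h)
        exact lt_min hq₁ hm2.2
      · exact hq₁
    have hrFq : rF ≤ q₁ := by
      rw [hrF]; split_ifs with h
      · exact min_le_left _ _
      · exact le_refl _
    have hrFF : ∀ z, p < z → z < rF → z ∉ (F : Set M) := by
      intro z hz1 hz2 hzF
      have hzFf : z ∈ Ff := Finset.mem_filter.2 ⟨hzF, hz1⟩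
      have hne : Ff.Nonempty := ⟨z, hzFf⟩
      have : rF ≤ Ff.min' hne := by rw [hrF]; simp only [dif_pos hne]; exact min_le_right _ _
      exact absurd (lt_of_lt_of_le hz2 (this.trans (Ff.min'_le z hzFf))) (lt_irrefl z)
    set Fs : Finset M := insert rF (Finset.image rf Finset.univ) with hFs
    have hFsne : Fs.Nonempty := ⟨rF, Finset.mem_insert_self _ _⟩
    set r := Fs.min' hFsne with hr
    have hFsgt : ∀ x ∈ Fs, p < x := by
      intro x hx
      rcases Finset.mem_insert.1 hx with rfl | hx
      · exact hrFp
      · obtain ⟨i, _, rfl⟩ := Finset.mem_image.1 hx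
        exact hrf1 i
    have hrp : p < r := hFsgt _ (Fs.min'_mem hFsne)
    refine ⟨r, hrp, Or.inr ?_⟩
    ext z
    simp only [mem_inter_iff, mem_Ioo, mem_empty_iff_false, iff_false]
    rintro ⟨⟨hz1, hz2⟩, hzX⟩
    have hrrF : r ≤ rF := Fs.min'_le rF (Finset.mem_insert_self _ _)
    have hzI : z ∈ I := hq₁sub ⟨hz1, lt_of_lt_of_le hz2 (hrrF.trans hrFq)⟩
    have : z ∈ (↑F : Set M) ∪ ⋃ i, J i := by rw [← hXI]; exact ⟨hzX, hzI⟩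
    rcases this with hzF | hzJ
    · exact hrFF z hz1 (lt_of_lt_of_le hz2 hrrF) hzF
    · obtain ⟨i, hzi⟩ := mem_iUnion.1 hzJ
      have hri : r ≤ rf i := Fs.min'_le _ (Finset.mem_insert.2 (Or.inr
        (Finset.mem_image.2 ⟨i, Finset.mem_univ i, rfl⟩)))
      have : z ∈ Ioo p (rf i) ∩ J i := ⟨⟨hz1, lt_of_lt_of_le hz2 hri⟩, hzi⟩
      rw [hrf2 i] at this
      exact this

lemma lom_left (hlo : LocallyOMinimal L M) {X : Set M} (hX : Def1 L M X) (p : M) :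
    ∃ r, r < p ∧ (Ioo r p ⊆ X ∨ Ioo r p ∩ X = ∅) := by
  classical
  obtain ⟨I, hI, hpI, F, n, J, hJ, hXI⟩ := hlo X hX p
  obtain ⟨q₁, hq₁, hq₁sub⟩ := ointerval_left_mem hI hpI
  by_cases hcase : ∃ i : Fin n, ∃ r, r < p ∧ Ioo r p ⊆ J i
  · obtain ⟨i, r, hr, hsub⟩ := hcase
    refine ⟨r, hr, Or.inl fun z hz => ?_⟩
    have : z ∈ X ∩ I := by
      rw [hXI]; exact Or.inr (mem_iUnion.2 ⟨i, hsub hz⟩)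
    exact this.1
  · push_neg at hcase
    have H : ∀ i : Fin n, ∃ r, r < p ∧ Ioo r p ∩ J i = ∅ := by
      intro i
      rcases ointerval_left (hJ i) p with ⟨r, hr, hsub⟩ | h
      · exact absurd hsub (hcase i r hr)
      · exact h
    choose rf hrf1 hrf2 using H
    set Ff := F.filter (fun a => a < p) with hFf
    set rF : M := if h : Ff.Nonempty then max q₁ (Ff.max' h) else q₁ with hrF
    have hrFp : rF < p := by
      rw [hrF]
      split_ifs with h
      · have hm2 : Ff.max' h ∈ F ∧ Ff.max' h < p := Finset.mem_filter.1 (Ff.max'_mem h)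
        exact max_lt hq₁ hm2.2
      · exact hq₁
    have hrFq : q₁ ≤ rF := by
      rw [hrF]; split_ifs with h
      · exact le_max_left _ _
      · exact le_refl _
    have hrFF : ∀ z, rF < z → z < p → z ∉ (F : Set M) := by
      intro z hz1 hz2 hzF
      have hzFf : z ∈ Ff := Finset.mem_filter.2 ⟨hzF, hz2⟩
      have hne : Ff.Nonempty := ⟨z, hzFf⟩
      have : Ff.max' hne ≤ rF := by rw [hrF]; simp only [dif_pos hne]; exact le_max_right _ _
      exact absurd (lt_of_le_of_lt ((Ff.le_max' z hzFf).trans this) hz1) (lt_irrefl z)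
    set Fs : Finset M := insert rF (Finset.image rf Finset.univ) with hFs
    have hFsne : Fs.Nonempty := ⟨rF, Finset.mem_insert_self _ _⟩
    set r := Fs.max' hFsne with hr
    have hFsgt : ∀ x ∈ Fs, x < p := by
      intro x hx
      rcases Finset.mem_insert.1 hx with rfl | hx
      · exact hrFp
      · obtain ⟨i, _, rfl⟩ := Finset.mem_image.1 hx
        exact hrf1 i
    have hrp : r < p := hFsgt _ (Fs.max'_mem hFsne)
    refine ⟨r, hrp, Or.inr ?_⟩
    ext z
    simp only [mem_inter_iff, mem_Ioo, mem_empty_iff_false, iff_false]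
    rintro ⟨⟨hz1, hz2⟩, hzX⟩
    have hrrF : rF ≤ r := Fs.le_max' rF (Finset.mem_insert_self _ _)
    have hzI : z ∈ I := hq₁sub ⟨lt_of_le_of_lt (hrFq.trans hrrF) hz1, hz2⟩
    have : z ∈ (↑F : Set M) ∪ ⋃ i, J i := by rw [← hXI]; exact ⟨hzX, hzI⟩
    rcases this with hzF | hzJ
    · exact hrFF z (lt_of_le_of_lt hrrF hz1) hz2 hzF
    · obtain ⟨i, hzi⟩ := mem_iUnion.1 hzJ
      have hri : rf i ≤ r := Fs.le_max' _ (Finset.mem_insert.2 (Or.inr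
        (Finset.mem_image.2 ⟨i, Finset.mem_univ i, rfl⟩)))
      have : z ∈ Ioo (rf i) p ∩ J i := ⟨⟨lt_of_le_of_lt hri hz1, hz2⟩, hzi⟩
      rw [hrf2 i] at this
      exact this

lemma def_min (hdc : DefinablyComplete L M) {X : Set M} (hX : Def1 L M X)
    (hcl : IsClosed X) (hne : X.Nonempty) (hbd : BddBelow X) :
    ∃ m, m ∈ X ∧ ∀ y ∈ X, m ≤ y := by
  obtain ⟨a, ha⟩ := (hdc X hX hne).2 hbd
  exact ⟨a, hcl.closure_subset (ha.mem_closure hne), fun y hy => ha.1 hy⟩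

lemma def_max (hdc : DefinablyComplete L M) {X : Set M} (hX : Def1 L M X)
    (hcl : IsClosed X) (hne : X.Nonempty) (hbd : BddAbove X) :
    ∃ m, m ∈ X ∧ ∀ y ∈ X, y ≤ m := by
  obtain ⟨a, ha⟩ := (hdc X hX hne).1 hbd
  exact ⟨a, hcl.closure_subset (ha.mem_closure hne), fun y hy => ha.1 hy⟩

end LOM
section Core
set_option linter.unusedSectionVars false
open FirstOrder.Language

variable {L : FirstOrder.Language} {M : Type*} [L.IsOrdered] [LinearOrder M] [L.Structure M]
  [L.OrderedStructure M] [DenselyOrdered M] [NoMaxOrder M] [NoMinOrder M]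
  [TopologicalSpace M] [OrderTopology M]

lemma toDef1 {X : Set M} (h : Set.Definable (univ : Set M) L {f : Fin 1 → M | f 0 ∈ X}) :
    Def1 L M X := h

lemma core (hlo : LocallyOMinimal L M) (hdc : DefinablyComplete L M)
    {LTs G : Set (M × M)}
    (hltdef : Set.Definable (univ : Set M) L {w : Fin 2 → M | (w 0, w 1) ∈ LTs})
    (hlt_asym : ∀ a b : M, (a, b) ∈ LTs → (b, a) ∈ LTs → False)
    {B : Set M}
    (hminp : ∀ X : Set M, Set.Definable (univ : Set M) L {f : Fin 1 → M | f 0 ∈ X} →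
      X.Nonempty → X ⊆ B → ∃ m ∈ X, ∀ y ∈ X, y ≠ m → (m, y) ∈ LTs)
    (hGdef : Set.Definable (univ : Set M) L {w : Fin 2 → M | (w 0, w 1) ∈ G})
    {p q : M} (hpq : p < q)
    (htot : ∀ t, t ∈ Ioo p q → ∃ y, (t, y) ∈ G)
    (hval : ∀ t y, t ∈ Ioo p q → (t, y) ∈ G → y ∈ B)
    (hfun : ∀ t y y', t ∈ Ioo p q → (t, y) ∈ G → (t, y') ∈ G → y = y')
    (hinj : ∀ t t' y, t ∈ Ioo p q → t' ∈ Ioo p q → (t, y) ∈ G → (t', y) ∈ G → t = t') :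
    False := by
  set W : Set M := {u | (p < u ∧ u < q) ∧ ∃ t, (p ≤ t ∧ t < u) ∧
    ∀ w, (t < w ∧ w < q ∧ ¬ w = u) → ∀ yu, ((u, yu) ∈ G →
      ∀ yw, ((w, yw) ∈ G → (yu, yw) ∈ LTs))} with hW
  have hWdef : Set.Definable (univ : Set M) L {f : Fin 1 → M | f 0 ∈ W} := by
    have d5 : Set.Definable (univ : Set M) L
        {f : Fin 5 → M | (f 2, f 0) ∈ G → (f 1, f 0) ∈ LTs} :=
      def_imp (def_rel2 hGdef 2 0) (def_rel2 hltdef 1 0)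
    have d4 : Set.Definable (univ : Set M) L
        {f : Fin 4 → M | ∀ yw, ((f 1, yw) ∈ G → (f 0, yw) ∈ LTs)} := def_all d5
    have d4' : Set.Definable (univ : Set M) L
        {f : Fin 4 → M | (f 3, f 0) ∈ G → ∀ yw, ((f 1, yw) ∈ G → (f 0, yw) ∈ LTs)} :=
      def_imp (def_rel2 hGdef 3 0) d4
    have d3 : Set.Definable (univ : Set M) L
        {f : Fin 3 → M | ∀ yu, ((f 2, yu) ∈ G → ∀ yw, ((f 0, yw) ∈ G → (yu, yw) ∈ LTs))} :=
      def_all d4'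
    have d3' : Set.Definable (univ : Set M) L
        {f : Fin 3 → M | (f 1 < f 0 ∧ f 0 < q ∧ ¬ f 0 = f 2) →
          ∀ yu, ((f 2, yu) ∈ G → ∀ yw, ((f 0, yw) ∈ G → (yu, yw) ∈ LTs))} :=
      def_imp (def_and (def_lt 1 0) (def_and (def_lt_const 0 (mem_univ q)) (def_not (def_eq 0 2)))) d3
    have d2 : Set.Definable (univ : Set M) L
        {f : Fin 2 → M | ∀ w, (f 0 < w ∧ w < q ∧ ¬ w = f 1) →
          ∀ yu, ((f 1, yu) ∈ G → ∀ yw, ((w, yw) ∈ G → (yu, yw) ∈ LTs))} := def_all d3'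
    have d2' : Set.Definable (univ : Set M) L
        {f : Fin 2 → M | (p ≤ f 0 ∧ f 0 < f 1) ∧ ∀ w, (f 0 < w ∧ w < q ∧ ¬ w = f 1) →
          ∀ yu, ((f 1, yu) ∈ G → ∀ yw, ((w, yw) ∈ G → (yu, yw) ∈ LTs))} :=
      def_and (def_and (def_const_le 0 (mem_univ p)) (def_lt 0 1)) d2
    have d1 : Set.Definable (univ : Set M) L
        {f : Fin 1 → M | ∃ t, (p ≤ t ∧ t < f 0) ∧ ∀ w, (t < w ∧ w < q ∧ ¬ w = f 0) →
          ∀ yu, ((f 0, yu) ∈ G → ∀ yw, ((w, yw) ∈ G → (yu, yw) ∈ LTs))} := def_ex d2'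
    exact def_and (def_and (def_const_lt 0 (mem_univ p)) (def_lt_const 0 (mem_univ q))) d1
  have hXdef : ∀ t1 t2 : M, Set.Definable (univ : Set M) L
      {f : Fin 1 → M | f 0 ∈ {y | ∃ w, (t1 < w ∧ w < t2) ∧ (w, y) ∈ G}} := by
    intro t1 t2
    exact def_ex (def_and (def_and (def_const_lt 0 (mem_univ t1)) (def_lt_const 0 (mem_univ t2)))
      (def_rel2 hGdef 0 1))
  -- Step A
  have stepA : ∀ t, p ≤ t → t < q → ∃ u, u ∈ W ∧ t < u ∧ u < q := by
    intro t hpt htq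
    have hXne : {y | ∃ w, (t < w ∧ w < q) ∧ (w, y) ∈ G}.Nonempty := by
      obtain ⟨w0, hw0⟩ := exists_between htq
      obtain ⟨y0, hy0⟩ := htot w0 ⟨lt_of_le_of_lt hpt hw0.1, hw0.2⟩
      exact ⟨y0, w0, hw0, hy0⟩
    have hXB : {y | ∃ w, (t < w ∧ w < q) ∧ (w, y) ∈ G} ⊆ B := by
      rintro y ⟨w, ⟨h1, h2⟩, hGm⟩
      exact hval w y ⟨lt_of_le_of_lt hpt h1, h2⟩ hGm
    obtain ⟨m, hmX, hleast⟩ := hminp _ (hXdef t q) hXne hXB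
    obtain ⟨ws, ⟨hw1, hw2⟩, hmG⟩ := hmX
    have hwsIo : ws ∈ Ioo p q := ⟨lt_of_le_of_lt hpt hw1, hw2⟩
    refine ⟨ws, ⟨⟨hwsIo.1, hwsIo.2⟩, t, ⟨hpt, hw1⟩, ?_⟩, hw1, hw2⟩
    rintro w ⟨hww1, hww2, hwne⟩ yu hyuG yw hywG
    have hyum : yu = m := hfun ws yu m hwsIo hyuG hmG
    have hywX : yw ∈ {y | ∃ w, (t < w ∧ w < q) ∧ (w, y) ∈ G} := ⟨w, ⟨hww1, hww2⟩, hywG⟩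
    rcases eq_or_ne yw m with he | hne'
    · exfalso
      apply hwne
      exact hinj w ws yw ⟨lt_of_le_of_lt hpt hww1, hww2⟩ hwsIo hywG (he ▸ hmG)
    · rw [hyum]
      exact hleast yw hywX hne'
  -- the supremum of W is q
  obtain ⟨u0, hu0W, hu0t, hu0q⟩ := stepA p le_rfl hpq
  have hWIoo : W ⊆ Ioo p q := fun u hu => ⟨hu.1.1, hu.1.2⟩
  obtain ⟨σ, hσ⟩ := (hdc W (toDef1 hWdef) ⟨u0, hu0W⟩).1 ⟨q, fun u hu => le_of_lt (hWIoo hu).2⟩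
  have hσq : σ ≤ q := hσ.2 (fun u hu => le_of_lt (hWIoo hu).2)
  have hpσ : p < σ := lt_of_lt_of_le hu0t (hσ.1 hu0W)
  have hσeq : σ = q := by
    rcases eq_or_lt_of_le hσq with h | h
    · exact h
    · exfalso
      obtain ⟨u, huW, hσu, _⟩ := stepA σ (le_of_lt hpσ) h
      exact absurd (hσ.1 huW) (not_le_of_gt hσu)
  have hacc : ∀ r, r < q → ∃ u ∈ W, r < u := by
    intro r hr
    by_contra hcon
    push_neg at hcon
    have : σ ≤ r := hσ.2 (fun u hu => hcon u hu)
    rw [hσeq] at this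
    exact absurd (lt_of_lt_of_le hr this) (lt_irrefl r)
  -- W contains an interval with right endpoint q
  obtain ⟨r, hrq, hcase⟩ := lom_left hlo (toDef1 hWdef) q
  have hIoosub : Ioo r q ⊆ W := by
    rcases hcase with h | h
    · exact h
    · exfalso
      obtain ⟨u, huW, hru⟩ := hacc r hrq
      have : u ∈ Ioo r q ∩ W := ⟨⟨hru, (hWIoo huW).2⟩, huW⟩
      rw [h] at this
      exact this
  set r' := max r p with hr'
  have hr'q : r' < q := max_lt hrq hpq
  have hsubW : Ioo r' q ⊆ W := fun z hz =>
    hIoosub ⟨lt_of_le_of_lt (le_max_left r p) hz.1, hz.2⟩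
  have hpr' : p ≤ r' := le_max_right r p
  -- final contradiction
  obtain ⟨t1, ht1⟩ := exists_between hr'q
  have hpt1 : p < t1 := lt_of_le_of_lt hpr' ht1.1
  have hXne : {y | ∃ w, (t1 < w ∧ w < q) ∧ (w, y) ∈ G}.Nonempty := by
    obtain ⟨w0, hw0⟩ := exists_between ht1.2
    obtain ⟨y0, hy0⟩ := htot w0 ⟨lt_trans hpt1 hw0.1, hw0.2⟩
    exact ⟨y0, w0, hw0, hy0⟩
  have hXB : {y | ∃ w, (t1 < w ∧ w < q) ∧ (w, y) ∈ G} ⊆ B := by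
    rintro y ⟨w, ⟨h1, h2⟩, hGm⟩
    exact hval w y ⟨lt_trans hpt1 h1, h2⟩ hGm
  obtain ⟨m, hmX, hleast⟩ := hminp _ (hXdef t1 q) hXne hXB
  obtain ⟨ws, ⟨hw1, hw2⟩, hmG⟩ := hmX
  obtain ⟨w', hw'⟩ := exists_between hw1
  have hw'q : w' < q := lt_trans hw'.2 hw2
  have hw'W : w' ∈ W := hsubW ⟨lt_trans ht1.1 hw'.1, hw'q⟩
  have hw'Io : w' ∈ Ioo p q := ⟨lt_trans hpt1 hw'.1, hw'q⟩
  have hwsIo : ws ∈ Ioo p q := ⟨lt_trans hpt1 hw1, hw2⟩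
  obtain ⟨y', hy'G⟩ := htot w' hw'Io
  obtain ⟨-, t, ⟨hpt, htw'⟩, hprop⟩ := hw'W
  have hlty'm : (y', m) ∈ LTs :=
    hprop ws ⟨lt_trans htw' hw'.2, hw2, (ne_of_gt hw'.2)⟩ y' hy'G m hmG
  have hy'X : y' ∈ {y | ∃ w, (t1 < w ∧ w < q) ∧ (w, y) ∈ G} := ⟨w', ⟨hw'.1, hw'q⟩, hy'G⟩
  rcases eq_or_ne y' m with he | hne'
  · have := hinj w' ws m hw'Io hwsIo (he ▸ hy'G) hmG
    exact absurd this (ne_of_lt hw'.2)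
  · exact hlt_asym y' m hlty'm (hleast y' hy'X hne')

end Core
section Middle
set_option linter.unusedSectionVars false
open FirstOrder.Language

variable {L : FirstOrder.Language} {M : Type*} [L.IsOrdered] [LinearOrder M] [L.Structure M]
  [L.OrderedStructure M] [DenselyOrdered M] [NoMaxOrder M] [NoMinOrder M]
  [TopologicalSpace M] [OrderTopology M]

lemma middle (hlo : LocallyOMinimal L M) (hdc : DefinablyComplete L M)
    {LTs : Set (M × M)}
    (hltdef : Set.Definable (univ : Set M) L {w : Fin 2 → M | (w 0, w 1) ∈ LTs})
    (hlt_asym : ∀ a b : M, (a, b) ∈ LTs → (b, a) ∈ LTs → False)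
    {B : Set M}
    (hBdef : Set.Definable (univ : Set M) L {f : Fin 1 → M | f 0 ∈ B})
    (hminp : ∀ X : Set M, Set.Definable (univ : Set M) L {f : Fin 1 → M | f 0 ∈ X} →
      X.Nonempty → X ⊆ B → ∃ m ∈ X, ∀ y ∈ X, y ≠ m → (m, y) ∈ LTs)
    {E : Set (M × M)}
    (hEdef : Set.Definable (univ : Set M) L {w : Fin 2 → M | (w 0, w 1) ∈ E})
    (hfib : ∀ y ∈ B, Paper.IsDiscrete {x | (x, y) ∈ E} ∧ IsClosed {x | (x, y) ∈ E})
    {p q : M} (hpq : p < q)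
    (hcov : ∀ t, t ∈ Ioo p q → ∃ y, y ∈ B ∧ (t, y) ∈ E) : False := by
  set G : Set (M × M) := {z | ((p < z.1 ∧ z.1 < q) ∧ (z.2 ∈ B ∧ (z.1, z.2) ∈ E)) ∧
    ∀ y', (y' ∈ B ∧ (z.1, y') ∈ E ∧ ¬ y' = z.2) → (z.2, y') ∈ LTs} with hG
  have hGdef : Set.Definable (univ : Set M) L {w : Fin 2 → M | (w 0, w 1) ∈ G} := by
    have d3 : Set.Definable (univ : Set M) L
        {f : Fin 3 → M | (f 0 ∈ B ∧ (f 1, f 0) ∈ E ∧ ¬ f 0 = f 2) → (f 2, f 0) ∈ LTs} :=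
      def_imp (def_and (def_rel1 hBdef 0) (def_and (def_rel2 hEdef 1 0) (def_not (def_eq 0 2))))
        (def_rel2 hltdef 2 0)
    have d2 : Set.Definable (univ : Set M) L
        {f : Fin 2 → M | ∀ y', (y' ∈ B ∧ (f 0, y') ∈ E ∧ ¬ y' = f 1) → (f 1, y') ∈ LTs} :=
      def_all d3
    exact def_and (def_and (def_and (def_const_lt 0 (mem_univ p)) (def_lt_const 0 (mem_univ q)))
      (def_and (def_rel1 hBdef 1) (def_rel2 hEdef 0 1))) d2
  -- totality of the selection
  have htot : ∀ t, t ∈ Ioo p q → ∃ y, (t, y) ∈ G := by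
    intro t ht
    have hXdef : Set.Definable (univ : Set M) L
        {f : Fin 1 → M | f 0 ∈ {y | y ∈ B ∧ (t, y) ∈ E}} :=
      def_and (def_rel1 hBdef 0) (def_rel2_constL hEdef (mem_univ t) 0)
    obtain ⟨y0, hy0⟩ := hcov t ht
    obtain ⟨m, hmX, hleast⟩ := hminp _ hXdef ⟨y0, hy0⟩ (fun y hy => hy.1)
    refine ⟨m, ⟨⟨ht.1, ht.2⟩, hmX⟩, ?_⟩
    rintro y' ⟨hy'B, hy'E, hy'ne⟩
    exact hleast y' ⟨hy'B, hy'E⟩ hy'ne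
  have hval : ∀ t y, t ∈ Ioo p q → (t, y) ∈ G → y ∈ B := fun t y _ h => h.1.2.1
  have hfun : ∀ t y y', t ∈ Ioo p q → (t, y) ∈ G → (t, y') ∈ G → y = y' := by
    intro t y y' _ hy hy'
    by_contra hne
    have h1 : (y, y') ∈ LTs := hy.2 y' ⟨hy'.1.2.1, hy'.1.2.2, fun e => hne e.symm⟩
    have h2 : (y', y) ∈ LTs := hy'.2 y ⟨hy.1.2.1, hy.1.2.2, fun e => hne (e.symm ▸ rfl)⟩
    exact hlt_asym y y' h1 h2
  -- the set of fiber-minima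
  set T : Set M := {t | (p < t ∧ t < q) ∧ ∀ t', (p < t' ∧ t' < t) →
    ∀ y, ((t, y) ∈ G → ¬ (t', y) ∈ G)} with hT
  have hTdef : Set.Definable (univ : Set M) L {f : Fin 1 → M | f 0 ∈ T} := by
    have d3 : Set.Definable (univ : Set M) L
        {f : Fin 3 → M | (f 2, f 0) ∈ G → ¬ (f 1, f 0) ∈ G} :=
      def_imp (def_rel2 hGdef 2 0) (def_not (def_rel2 hGdef 1 0))
    have d2 : Set.Definable (univ : Set M) L
        {f : Fin 2 → M | ∀ y, ((f 1, y) ∈ G → ¬ (f 0, y) ∈ G)} := def_all d3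
    have d2' : Set.Definable (univ : Set M) L
        {f : Fin 2 → M | (p < f 0 ∧ f 0 < f 1) → ∀ y, ((f 1, y) ∈ G → ¬ (f 0, y) ∈ G)} :=
      def_imp (def_and (def_const_lt 0 (mem_univ p)) (def_lt 0 1)) d2
    have d1 : Set.Definable (univ : Set M) L
        {f : Fin 1 → M | ∀ t', (p < t' ∧ t' < f 0) →
          ∀ y, ((f 0, y) ∈ G → ¬ (t', y) ∈ G)} := def_all d2'
    exact def_and (def_and (def_const_lt 0 (mem_univ p)) (def_lt_const 0 (mem_univ q))) d1
  -- every point of the interval has a fiber-minimum to its left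
  have ht : ∀ t, t ∈ Ioo p q → ∃ t'', t'' ∈ T ∧ p < t'' ∧ t'' ≤ t := by
    intro t htIoo
    obtain ⟨y, hyG⟩ := htot t htIoo
    have hyB : y ∈ B := hval t y htIoo hyG
    set F : Set M := {x | ((p < x ∧ x < q) ∧ (x, y) ∈ G)} with hF
    have hFdef : Set.Definable (univ : Set M) L {f : Fin 1 → M | f 0 ∈ F} :=
      def_and (def_and (def_const_lt 0 (mem_univ p)) (def_lt_const 0 (mem_univ q)))
        (def_rel2_constR hGdef (mem_univ y) 0)
    have hFsub : F ⊆ {x | (x, y) ∈ E} := fun x hx => hx.2.1.2.2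
    have hFc := (subset_dc hFsub (hfib y hyB).1 (hfib y hyB).2).2
    obtain ⟨m, hmF, hmin⟩ := def_min hdc (toDef1 hFdef) hFc ⟨t, ⟨htIoo.1, htIoo.2⟩, hyG⟩
      ⟨p, fun x hx => le_of_lt hx.1.1⟩
    refine ⟨m, ⟨⟨hmF.1.1, hmF.1.2⟩, ?_⟩, hmF.1.1, hmin t ⟨⟨htIoo.1, htIoo.2⟩, hyG⟩⟩
    rintro t' ⟨hpt', ht'm⟩ y' hmy' ht'y'
    have hy'y : y' = y := hfun m y' y ⟨hmF.1.1, hmF.1.2⟩ hmy' hmF.2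
    have ht'F : t' ∈ F := ⟨⟨hpt', lt_trans ht'm hmF.1.2⟩, hy'y ▸ ht'y'⟩
    exact absurd (hmin t' ht'F) (not_le_of_gt ht'm)
  -- T contains an interval (p, r')
  obtain ⟨r, hpr, hcase⟩ := lom_right hlo (toDef1 hTdef) p
  have hsubT : Ioo p r ⊆ T := by
    rcases hcase with h | h
    · exact h
    · exfalso
      obtain ⟨t, htm⟩ := exists_between (lt_min hpr hpq)
      have htIoo : t ∈ Ioo p q := ⟨htm.1, lt_of_lt_of_le htm.2 (min_le_right r q)⟩
      obtain ⟨t'', ht''T, hpt'', ht''t⟩ := ht t htIoo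
      have : t'' ∈ Ioo p r ∩ T :=
        ⟨⟨hpt'', lt_of_le_of_lt ht''t (lt_of_lt_of_le htm.2 (min_le_left r q))⟩, ht''T⟩
      rw [h] at this
      exact this
  set r' := min r q with hr'
  have hpr' : p < r' := lt_min hpr hpq
  have hr'q : r' ≤ q := min_le_right r q
  have hsub2 : Ioo p r' ⊆ Ioo p q := fun z hz => ⟨hz.1, lt_of_lt_of_le hz.2 hr'q⟩
  have hsubT' : Ioo p r' ⊆ T := fun z hz =>
    hsubT ⟨hz.1, lt_of_lt_of_le hz.2 (min_le_left r q)⟩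
  exact core hlo hdc hltdef hlt_asym hminp hGdef hpr'
    (fun t htI => htot t (hsub2 htI))
    (fun t y htI hG' => hval t y (hsub2 htI) hG')
    (fun t y y' htI hG1 hG2 => hfun t y y' (hsub2 htI) hG1 hG2)
    (by
      intro t t' y htI ht'I hG1 hG2
      rcases lt_trichotomy t t' with hlt | heq | hgt
      · exact absurd hG1 ((hsubT' ht'I).2 t ⟨htI.1, hlt⟩ y hG2)
      · exact heq
      · exact absurd hG2 ((hsubT' htI).2 t' ⟨ht'I.1, hgt⟩ y hG1))

end Middle
section UnionDC
set_option linter.unusedSectionVars false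
open FirstOrder.Language

variable {L : FirstOrder.Language} {M : Type*} [L.IsOrdered] [LinearOrder M] [L.Structure M]
  [L.OrderedStructure M] [DenselyOrdered M] [NoMaxOrder M] [NoMinOrder M]
  [TopologicalSpace M] [OrderTopology M]

lemma noint (hlo : LocallyOMinimal L M) (hdc : DefinablyComplete L M)
    {S : Set M} (hSdef : Set.Definable (univ : Set M) L {f : Fin 1 → M | f 0 ∈ S})
    (hSd : Paper.IsDiscrete S) (hSc : IsClosed S)
    {E : Set (M × M)} (hEdef : Set.Definable (univ : Set M) L {w : Fin 2 → M | (w 0, w 1) ∈ E})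
    (hfib : ∀ y ∈ S, Paper.IsDiscrete {x | (x, y) ∈ E} ∧ IsClosed {x | (x, y) ∈ E})
    {c d : M} (hcd : c < d)
    (hcov : ∀ t, t ∈ Ioo c d → ∃ y, y ∈ S ∧ (t, y) ∈ E) : False := by
  obtain ⟨t₀, ht₀⟩ := exists_between hcd
  obtain ⟨y₀, hy₀S, hy₀E⟩ := hcov t₀ ht₀
  set Z : Set M := {t | ∃ y, (y ∈ S ∧ y₀ ≤ y) ∧ (t, y) ∈ E} with hZ
  have hZdef : Set.Definable (univ : Set M) L {f : Fin 1 → M | f 0 ∈ Z} :=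
    def_ex (def_and (def_and (def_rel1 hSdef 0) (def_const_le 0 (mem_univ y₀)))
      (def_rel2 hEdef 1 0))
  obtain ⟨r, ht₀r, hcase⟩ := lom_right hlo (toDef1 hZdef) t₀
  set r' := min r d with hr'd
  have ht₀r' : t₀ < r' := lt_min ht₀r ht₀.2
  have hIoocd : Ioo t₀ r' ⊆ Ioo c d := fun z hz =>
    ⟨lt_trans ht₀.1 hz.1, lt_of_lt_of_le hz.2 (min_le_right r d)⟩
  rcases hcase with hsubZ | hdisjZ
  · -- upward case
    refine middle hlo hdc (LTs := {z : M × M | z.1 < z.2}) (def_lt 0 1)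
      (fun a b h1 h2 => absurd h1 (not_lt_of_gt h2))
      (B := {y | y ∈ S ∧ y₀ ≤ y})
      (def_and (def_rel1 hSdef 0) (def_const_le 0 (mem_univ y₀)))
      ?_ hEdef (fun y hy => hfib y hy.1) ht₀r' ?_
    · intro X hXdef hXne hXB
      have hXS : X ⊆ S := fun y hy => (hXB hy).1
      obtain ⟨m, hm, hle⟩ := def_min hdc (toDef1 hXdef) (subset_dc hXS hSd hSc).2 hXne
        ⟨y₀, fun y hy => (hXB hy).2⟩
      exact ⟨m, hm, fun y hy hne => lt_of_le_of_ne (hle y hy) hne.symm⟩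
    · intro t htI
      obtain ⟨y, ⟨hyS, hy₀y⟩, hyE⟩ := hsubZ ⟨htI.1, lt_of_lt_of_le htI.2 (min_le_left r d)⟩
      exact ⟨y, ⟨hyS, hy₀y⟩, hyE⟩
  · -- downward case
    refine middle hlo hdc (LTs := {z : M × M | z.2 < z.1}) (def_lt 1 0)
      (fun a b h1 h2 => absurd h1 (not_lt_of_gt h2))
      (B := {y | y ∈ S ∧ y ≤ y₀})
      (def_and (def_rel1 hSdef 0) (def_le_const 0 (mem_univ y₀)))
      ?_ hEdef (fun y hy => hfib y hy.1) ht₀r' ?_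
    · intro X hXdef hXne hXB
      have hXS : X ⊆ S := fun y hy => (hXB hy).1
      obtain ⟨m, hm, hle⟩ := def_max hdc (toDef1 hXdef) (subset_dc hXS hSd hSc).2 hXne
        ⟨y₀, fun y hy => (hXB hy).2⟩
      exact ⟨m, hm, fun y hy hne => lt_of_le_of_ne (hle y hy) hne⟩
    · intro t htI
      obtain ⟨y, hyS, hyE⟩ := hcov t (hIoocd htI)
      rcases le_or_gt y y₀ with hle | hlt
      · exact ⟨y, ⟨hyS, hle⟩, hyE⟩
      · exfalso
        have : t ∈ Ioo t₀ r ∩ Z :=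
          ⟨⟨htI.1, lt_of_lt_of_le htI.2 (min_le_left r d)⟩, ⟨y, ⟨hyS, le_of_lt hlt⟩, hyE⟩⟩
        rw [hdisjZ] at this
        exact this

lemma union_dc (hlo : LocallyOMinimal L M) (hdc : DefinablyComplete L M)
    {S : Set M} (hSdef : Set.Definable (univ : Set M) L {f : Fin 1 → M | f 0 ∈ S})
    (hSd : Paper.IsDiscrete S) (hSc : IsClosed S)
    {E : Set (M × M)} (hEdef : Set.Definable (univ : Set M) L {w : Fin 2 → M | (w 0, w 1) ∈ E})
    (hfib : ∀ y ∈ S, Paper.IsDiscrete {x | (x, y) ∈ E} ∧ IsClosed {x | (x, y) ∈ E}) :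
    Paper.IsDiscrete {x | ∃ y, y ∈ S ∧ (x, y) ∈ E} ∧ IsClosed {x | ∃ y, y ∈ S ∧ (x, y) ∈ E} := by
  set D : Set M := {x | ∃ y, y ∈ S ∧ (x, y) ∈ E} with hD
  have hDdef : Set.Definable (univ : Set M) L {f : Fin 1 → M | f 0 ∈ D} :=
    def_ex (def_and (def_rel1 hSdef 0) (def_rel2 hEdef 1 0))
  apply dc_iff_crit.2
  intro x
  obtain ⟨u, hux, hcaseL⟩ := lom_left hlo (toDef1 hDdef) x
  obtain ⟨v, hxv, hcaseR⟩ := lom_right hlo (toDef1 hDdef) x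
  have hL : Ioo u x ∩ D = ∅ := by
    rcases hcaseL with h | h
    · exact absurd (noint hlo hdc hSdef hSd hSc hEdef hfib hux (fun t htI => h htI)) id
    · exact h
  have hR : Ioo x v ∩ D = ∅ := by
    rcases hcaseR with h | h
    · exact absurd (noint hlo hdc hSdef hSd hSc hEdef hfib hxv (fun t htI => h htI)) id
    · exact h
  refine ⟨u, v, hux, hxv, ?_⟩
  intro z h1 h2 hzD
  rcases lt_trichotomy z x with hlt | heq | hgt
  · exfalso
    have : z ∈ Ioo u x ∩ D := ⟨⟨h1, hlt⟩, hzD⟩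
    rw [hL] at this; exact this
  · exact heq
  · exfalso
    have : z ∈ Ioo x v ∩ D := ⟨⟨hgt, h2⟩, hzD⟩
    rw [hR] at this; exact this

end UnionDC
section Split
set_option linter.unusedSectionVars false
open FirstOrder.Language

variable {L : FirstOrder.Language} {M : Type*} [L.IsOrdered] [LinearOrder M] [L.Structure M]
  [L.OrderedStructure M] [DenselyOrdered M] [NoMaxOrder M] [NoMinOrder M]
  [TopologicalSpace M] [OrderTopology M]

lemma split (hlo : LocallyOMinimal L M) (hdc : DefinablyComplete L M)
    {A₀ : Set M} {b : M} {S : Set M}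
    (hSdef : A₀.Definable L {f : Fin 1 → M | f 0 ∈ S})
    (hSd : Paper.IsDiscrete S) (hSc : IsClosed S) (hbS : b ∈ S) {s : Set M}
    (hsdef : (insert b A₀).Definable L {f : Fin 1 → M | f 0 ∈ s})
    (hsd : Paper.IsDiscrete s) (hsc : IsClosed s) {x : M} (hx : x ∈ s) :
    ∃ s' : Set M, A₀.Definable L {f : Fin 1 → M | f 0 ∈ s'} ∧
      Paper.IsDiscrete s' ∧ IsClosed s' ∧ x ∈ s' := by
  classical
  obtain ⟨φ, hφ⟩ := Set.definable_iff_exists_formula_sum.1 hsdef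
  set ρ : (↥(insert b A₀) ⊕ Fin 1) → (↥A₀ ⊕ Fin 2) :=
    Sum.elim (fun c => if h : (c : M) ∈ A₀ then Sum.inl ⟨(c : M), h⟩ else Sum.inr 1)
      (fun _ => Sum.inr 0) with hρ
  set ψ := φ.relabel ρ with hψ
  set E : Set (M × M) := {z | ψ.Realize (Sum.elim ((↑) : ↥A₀ → M) ![z.1, z.2])} with hE
  have hEdef : A₀.Definable L {w : Fin 2 → M | (w 0, w 1) ∈ E} := by
    apply Set.definable_iff_exists_formula_sum.2
    refine ⟨ψ, ?_⟩
    ext w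
    have hw : ![w 0, w 1] = w := by funext i; fin_cases i <;> rfl
    simp only [hE, mem_setOf_eq, hw]
  have hkey : ∀ t : M, (t, b) ∈ E ↔ t ∈ s := by
    intro t
    have h1 : t ∈ s ↔ φ.Realize (Sum.elim ((↑) : ↥(insert b A₀) → M) ![t]) := by
      have : (![t] ∈ {f : Fin 1 → M | f 0 ∈ s}) ↔
          (![t] ∈ {v : Fin 1 → M | φ.Realize (Sum.elim (↑) v)}) := by rw [hφ]
      exact this
    have h2 : (t, b) ∈ E ↔ φ.Realize ((Sum.elim ((↑) : ↥A₀ → M) ![t, b]) ∘ ρ) := by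
      rw [hE]
      exact Formula.realize_relabel
    have h3 : (Sum.elim ((↑) : ↥A₀ → M) ![t, b]) ∘ ρ
        = Sum.elim ((↑) : ↥(insert b A₀) → M) ![t] := by
      funext z
      rcases z with c | i
      · simp only [hρ, Function.comp_apply, Sum.elim_inl]
        split_ifs with h
        · rfl
        · have : (c : M) = b := by
            rcases c.2 with h' | h'
            · exact h'
            · exact absurd h' h
          simp [this]
      · have : i = 0 := Subsingleton.elim i 0
        subst this
        rfl
    rw [h2, h3, h1]
  -- the set of parameters whose fiber is discrete and closed
  set DCset : Set M := {y | ∀ x', ∃ u, ∃ v, (u < x' ∧ x' < v) ∧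
    ∀ z, (u < z ∧ z < v ∧ (z, y) ∈ E) → z = x'} with hDCset
  have hDCdef : A₀.Definable L {f : Fin 1 → M | f 0 ∈ DCset} := by
    have d5 : A₀.Definable L {f : Fin 5 → M |
        (f 2 < f 0 ∧ f 0 < f 1 ∧ (f 0, f 4) ∈ E) → f 0 = f 3} :=
      def_imp (def_and (def_lt 2 0) (def_and (def_lt 0 1) (def_rel2 hEdef 0 4))) (def_eq 0 3)
    have d4 : A₀.Definable L {f : Fin 4 → M |
        ∀ z, (f 1 < z ∧ z < f 0 ∧ (z, f 3) ∈ E) → z = f 2} := def_all d5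
    have d4' : A₀.Definable L {f : Fin 4 → M |
        (f 1 < f 2 ∧ f 2 < f 0) ∧ ∀ z, (f 1 < z ∧ z < f 0 ∧ (z, f 3) ∈ E) → z = f 2} :=
      def_and (def_and (def_lt 1 2) (def_lt 2 0)) d4
    have d3 : A₀.Definable L {f : Fin 3 → M |
        ∃ v, (f 0 < f 1 ∧ f 1 < v) ∧ ∀ z, (f 0 < z ∧ z < v ∧ (z, f 2) ∈ E) → z = f 1} :=
      def_ex d4'
    have d2 : A₀.Definable L {f : Fin 2 → M |
        ∃ u, ∃ v, (u < f 0 ∧ f 0 < v) ∧ ∀ z, (u < z ∧ z < v ∧ (z, f 1) ∈ E) → z = f 0} :=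
      def_ex d3
    exact def_all d2
  set SS : Set M := S ∩ DCset with hSS
  have hSSdef : A₀.Definable L {f : Fin 1 → M | f 0 ∈ SS} :=
    def_and (def_rel1 hSdef 0) (def_rel1 hDCdef 0)
  obtain ⟨hSSd, hSSc⟩ := subset_dc inter_subset_left hSd hSc
  have hfibb : {z : M | (z, b) ∈ E} = s := Set.ext (fun z => hkey z)
  have hbSS : b ∈ SS := by
    refine ⟨hbS, ?_⟩
    intro x'
    obtain ⟨u, v, hu, hv, h3⟩ := (dc_iff_crit.1 ⟨hsd, hsc⟩) x'
    refine ⟨u, v, ⟨hu, hv⟩, ?_⟩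
    rintro z ⟨hz1, hz2, hz3⟩
    exact h3 z hz1 hz2 ((hkey z).1 hz3)
  have hfib' : ∀ y ∈ SS, Paper.IsDiscrete {x | (x, y) ∈ E} ∧ IsClosed {x | (x, y) ∈ E} := by
    intro y hy
    apply dc_iff_crit.2
    intro x'
    obtain ⟨u, v, ⟨hu, hv⟩, h3⟩ := hy.2 x'
    refine ⟨u, v, hu, hv, ?_⟩
    intro z hz1 hz2 hz3
    exact h3 z ⟨hz1, hz2, hz3⟩
  refine ⟨{x | ∃ y, y ∈ SS ∧ (x, y) ∈ E},
    def_ex (def_and (def_rel1 hSSdef 0) (def_rel2 hEdef 1 0)), ?_, ?_,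
    ⟨b, hbSS, (hkey x).2 hx⟩⟩
  · exact (union_dc hlo hdc (hSSdef.mono (subset_univ A₀)) hSSd hSSc
      (hEdef.mono (subset_univ A₀)) hfib').1
  · exact (union_dc hlo hdc (hSSdef.mono (subset_univ A₀)) hSSd hSSc
      (hEdef.mono (subset_univ A₀)) hfib').2

end Split
section Final
set_option linter.unusedSectionVars false
open FirstOrder.Language

variable {L : FirstOrder.Language} {M : Type*} [L.IsOrdered] [LinearOrder M] [L.Structure M]
  [L.OrderedStructure M] [DenselyOrdered M] [NoMaxOrder M] [NoMinOrder M]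
  [TopologicalSpace M] [OrderTopology M]

lemma singleton_dc (a : M) : Paper.IsDiscrete ({a} : Set M) ∧ IsClosed ({a} : Set M) := by
  apply dc_iff_crit.2
  intro x
  rcases lt_trichotomy x a with h | h | h
  · obtain ⟨u, hu⟩ := exists_lt x
    refine ⟨u, a, hu, h, ?_⟩
    intro z _ hz2 hz3
    exact absurd (hz3 ▸ hz2) (lt_irrefl a)
  · obtain ⟨u, hu⟩ := exists_lt x
    obtain ⟨v, hv⟩ := exists_gt x
    exact ⟨u, v, hu, hv, fun z _ _ hz3 => hz3.trans h.symm⟩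
  · obtain ⟨v, hv⟩ := exists_gt x
    refine ⟨a, v, h, hv, ?_⟩
    intro z hz1 _ hz3
    exact absurd (hz3 ▸ hz1) (lt_irrefl a)

lemma singleton_mem_discl {A : Set M} {a : M} (ha : a ∈ A) : a ∈ discl L M A :=
  ⟨{a}, def_const 0 ha, (singleton_dc a).1, (singleton_dc a).2, rfl⟩

end Final

/-- In a definably complete locally o-minimal structure, the discrete closure operator is
idempotent: `discl (discl A) = discl A` for every `A ⊆ M`. -/
theorem discl_idem
    {L : FirstOrder.Language} {M : Type*} [L.IsOrdered] [LinearOrder M] [L.Structure M]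
    [L.OrderedStructure M] [DenselyOrdered M] [NoMaxOrder M] [NoMinOrder M]
    [TopologicalSpace M] [OrderTopology M]
    (hlo : LocallyOMinimal L M) (hdc : DefinablyComplete L M)
    (A : Set M) :
    discl L M (discl L M A) = discl L M A := by
  apply Set.Subset.antisymm
  · rintro x ⟨s, hsdef, hsd, hsc, hx⟩
    obtain ⟨A0, hA0sub, hA0def⟩ := Set.definable_iff_finitely_definable.1 hsdef
    have main : ∀ (B : Finset M), ↑B ⊆ discl L M A → ∀ s : Set M,
        (A ∪ ↑B).Definable L {f : Fin 1 → M | f 0 ∈ s} → Paper.IsDiscrete s → IsClosed s →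
        ∀ x, x ∈ s → x ∈ discl L M A := by
      intro B
      induction B using Finset.induction_on with
      | empty =>
        intro _ s hdef hd hc x hx
        exact ⟨s, hdef.mono (by simp), hd, hc, hx⟩
      | @insert b B hbB ih =>
        intro hsub s hdef hd hc x hx
        have hb : b ∈ discl L M A := hsub (by simp)
        obtain ⟨S, hSdef, hSd, hSc, hbS⟩ := hb
        have hdef' : (insert b (A ∪ ↑B)).Definable L {f : Fin 1 → M | f 0 ∈ s} := by
          refine hdef.mono ?_
          intro z hz
          rcases hz with hz | hz
          · exact Or.inr (Or.inl hz)
          · rw [Finset.coe_insert] at hz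
            rcases hz with hz | hz
            · exact Or.inl hz
            · exact Or.inr (Or.inr hz)
        have hSdef' : (A ∪ ↑B).Definable L {f : Fin 1 → M | f 0 ∈ S} :=
          hSdef.mono Set.subset_union_left
        obtain ⟨s', hs'def, hs'd, hs'c, hxs'⟩ :=
          split hlo hdc hSdef' hSd hSc hbS hdef' hd hc hx
        exact ih (fun z hz => hsub (by simp [hz])) s' hs'def hs'd hs'c x hxs'
    exact main A0 hA0sub s (hA0def.mono Set.subset_union_right) hsd hsc x hx
  · rintro x ⟨s, hsdef, hsd, hsc, hx⟩
    exact ⟨s, hsdef.mono (fun a ha => singleton_mem_discl ha), hsd, hsc, hx⟩
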